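/- Let C ≥ 0, R > 0 and m ∈ ℝ, and let (f_k)_{k≥0} be a sequence of complex numbers with |f_k| ≤ C·R^k·k!/(k+1)^m for all k. Then for every c₁ with 0 < c₁ < e/(3R) there exist c₂ > 0 and C' ≥ 0 such that for every integer N ≥ 1 one has |∑_{k=⌈c₁N⌉}^{⌊eN/(3R)⌋} N^{-k}·f_k| ≤ C'·exp(-c₂·N). -/

import Mathlib

/-- The tail of the summation of an analytic symbol, from `⌈c₁N⌉` to `⌊eN/(3R)⌋`,
is exponentially small. -/
theorem analytic_symbol_tail_exponentially_small
    (C R m : ℝ) (hC : 0 ≤ C) (hR : 0 < R) (f : ℕ → ℂ)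
    (hf : ∀ k : ℕ, ‖f k‖ ≤ C * R ^ k * (Nat.factorial k) / ((k : ℝ) + 1) ^ m) :
    ∀ c₁ : ℝ, 0 < c₁ → c₁ < Real.exp 1 / (3 * R) →
      ∃ c₂ : ℝ, 0 < c₂ ∧ ∃ C' : ℝ, 0 ≤ C' ∧ ∀ N : ℕ, 1 ≤ N →
        ‖∑ k ∈ Finset.Icc ⌈c₁ * N⌉₊ ⌊Real.exp 1 * N / (3 * R)⌋₊,
          ((N : ℂ))⁻¹ ^ k * f k‖ ≤ C' * Real.exp (-c₂ * N) := by
  intro c₁ hc₁ _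
  set r : ℝ := 19 / 20 with hr_def
  have hr0 : (0:ℝ) < r := by norm_num [hr_def]
  have hr1 : r < 1 := by norm_num [hr_def]
  set q : ℝ := Real.exp 1 / 3 / r with hq_def
  have hq0 : 0 < q := by positivity
  have hq1 : q < 1 := by
    have h := Real.exp_one_lt_d9
    rw [hq_def, hr_def, div_div, div_lt_one (by norm_num)]
    nlinarith
  set M : ℕ := ⌈|m|⌉₊ with hM_def
  -- the sequence (k+1)^M q^k is bounded above by some A ≥ 1
  have htend : Filter.Tendsto (fun k : ℕ => ((k:ℝ)+1)^M * q^k) Filter.atTop (nhds 0) := by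
    have h1 : Filter.Tendsto (fun n : ℕ => (n:ℝ)^M * q^n) Filter.atTop (nhds 0) :=
      tendsto_pow_const_mul_const_pow_of_lt_one M hq0.le hq1
    have h2 := (h1.comp (Filter.tendsto_add_atTop_nat 1)).const_mul (1/q)
    rw [mul_zero] at h2
    convert h2 using 2 with k
    simp only [Function.comp_apply]
    push_cast
    field_simp
    ring
  obtain ⟨A, hA⟩ := htend.bddAbove_range
  have hA' : ∀ k : ℕ, ((k:ℝ)+1)^M * q^k ≤ A := fun k => hA ⟨k, rfl⟩
  have hA1 : (1:ℝ) ≤ A := by have := hA' 0; simpa using this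
  have hA0 : (0:ℝ) ≤ A := le_trans zero_le_one hA1
  have hlog : 0 < Real.log (20/19 : ℝ) := Real.log_pos (by norm_num)
  refine ⟨c₁ * Real.log (20/19), mul_pos hc₁ hlog, C * A / (1 - r), ?_, ?_⟩
  · apply div_nonneg (mul_nonneg hC hA0); linarith
  intro N hN
  have hN0 : (0:ℝ) < N := by exact_mod_cast hN
  set K := ⌈c₁ * N⌉₊ with hK_def
  set L := ⌊Real.exp 1 * N / (3 * R)⌋₊ with hL_def
  -- per-term bound
  have hterm : ∀ k ∈ Finset.Icc K L,
      ‖((N : ℂ))⁻¹ ^ k * f k‖ ≤ C * A * r ^ k := by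
    intro k hk
    rw [Finset.mem_Icc] at hk
    have hkL : (k:ℝ) ≤ Real.exp 1 * N / (3 * R) := by
      refine le_trans ?_ (Nat.floor_le (by positivity))
      exact_mod_cast hk.2
    have hk3 : R * k / N ≤ Real.exp 1 / 3 := by
      rw [div_le_div_iff₀ hN0 (by norm_num)]
      rw [le_div_iff₀ (by positivity : (0:ℝ) < 3 * R)] at hkL
      nlinarith
    have habs : ‖((N : ℂ))⁻¹ ^ k * f k‖
        = ((N:ℝ)⁻¹) ^ k * ‖f k‖ := by
      rw [norm_mul, norm_pow, norm_inv, Complex.norm_natCast]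
    rw [habs]
    calc ((N:ℝ)⁻¹) ^ k * ‖f k‖
        ≤ ((N:ℝ)⁻¹) ^ k * (C * R ^ k * (Nat.factorial k) / ((k : ℝ) + 1) ^ m) := by
          apply mul_le_mul_of_nonneg_left (hf k) (by positivity)
      _ = C * (R ^ k * (Nat.factorial k) * ((N:ℝ)⁻¹) ^ k) * (((k : ℝ) + 1) ^ m)⁻¹ := by
          ring
      _ ≤ C * (Real.exp 1 / 3) ^ k * ((k:ℝ)+1) ^ M := by
          have hfac : (Nat.factorial k : ℝ) ≤ (k:ℝ) ^ k := by
            exact_mod_cast Nat.factorial_le_pow k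
          have h1 : R ^ k * (Nat.factorial k : ℝ) * ((N:ℝ)⁻¹) ^ k
              ≤ (Real.exp 1 / 3) ^ k := by
            calc R ^ k * (Nat.factorial k : ℝ) * ((N:ℝ)⁻¹) ^ k
                ≤ R ^ k * (k:ℝ) ^ k * ((N:ℝ)⁻¹) ^ k := by
                  apply mul_le_mul_of_nonneg_right _ (by positivity)
                  exact mul_le_mul_of_nonneg_left hfac (by positivity)
              _ = (R * k / N) ^ k := by
                  rw [div_eq_mul_inv, mul_pow, mul_pow]
              _ ≤ (Real.exp 1 / 3) ^ k := by
                  exact pow_le_pow_left₀ (by positivity) hk3 k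
          have h2 : (((k : ℝ) + 1) ^ m)⁻¹ ≤ ((k:ℝ)+1) ^ M := by
            have hb : (1:ℝ) ≤ (k:ℝ) + 1 := le_add_of_nonneg_left (Nat.cast_nonneg k)
            have : (((k : ℝ) + 1) ^ m)⁻¹ = ((k:ℝ)+1) ^ (-m) := by
              rw [← Real.rpow_neg (by positivity)]
            rw [this, ← Real.rpow_natCast ((k:ℝ)+1) M]
            apply Real.rpow_le_rpow_of_exponent_le hb
            calc -m ≤ |m| := neg_le_abs m
              _ ≤ (⌈|m|⌉₊ : ℝ) := Nat.le_ceil _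
          calc C * (R ^ k * (Nat.factorial k : ℝ) * ((N:ℝ)⁻¹) ^ k) * (((k : ℝ) + 1) ^ m)⁻¹
              ≤ C * (Real.exp 1 / 3) ^ k * (((k : ℝ) + 1) ^ m)⁻¹ := by
                have hnn : (0:ℝ) ≤ (((k : ℝ) + 1) ^ m)⁻¹ := by positivity
                exact mul_le_mul_of_nonneg_right (mul_le_mul_of_nonneg_left h1 hC) hnn
            _ ≤ C * (Real.exp 1 / 3) ^ k * ((k:ℝ)+1) ^ M := by
                apply mul_le_mul_of_nonneg_left h2 (by positivity)
      _ = C * (((k:ℝ)+1) ^ M * q ^ k) * r ^ k := by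
          have : Real.exp 1 / 3 = q * r := by
            rw [hq_def]; field_simp
          rw [this, mul_pow]; ring
      _ ≤ C * A * r ^ k := by
          apply mul_le_mul_of_nonneg_right _ (by positivity)
          exact mul_le_mul_of_nonneg_left (hA' k) hC
  -- sum the geometric bound
  have hsum : ∑ k ∈ Finset.Icc K L, (C * A * r ^ k) ≤ C * A * (r ^ K / (1 - r)) := by
    rw [← Finset.mul_sum]
    apply mul_le_mul_of_nonneg_left _ (mul_nonneg hC hA0)
    calc ∑ k ∈ Finset.Icc K L, r ^ k = ∑ k ∈ Finset.Ico K (L+1), r ^ k := by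
          rw [Finset.Ico_add_one_right_eq_Icc]
      _ ≤ r ^ K / (1 - r) := geom_sum_Ico_le_of_lt_one hr0.le hr1
  have hgeom : r ^ K ≤ Real.exp (-(c₁ * Real.log (20/19)) * N) := by
    have h1 : r ^ K = r ^ (K:ℝ) := (Real.rpow_natCast r K).symm
    have h2 : r ^ (K:ℝ) ≤ r ^ (c₁ * N) :=
      Real.rpow_le_rpow_of_exponent_ge hr0 hr1.le (Nat.le_ceil _)
    have h3 : r ^ (c₁ * (N:ℝ)) = Real.exp (-(c₁ * Real.log (20/19)) * N) := by
      rw [Real.rpow_def_of_pos hr0]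
      congr 1
      have : Real.log r = -Real.log (20/19) := by
        rw [hr_def, show (19/20 : ℝ) = (20/19)⁻¹ by norm_num, Real.log_inv]
      rw [this]; ring
    rw [h1, ← h3]; exact h2
  calc ‖∑ k ∈ Finset.Icc K L, ((N : ℂ))⁻¹ ^ k * f k‖
      ≤ ∑ k ∈ Finset.Icc K L, ‖((N : ℂ))⁻¹ ^ k * f k‖ :=
        norm_sum_le _ _
    _ ≤ ∑ k ∈ Finset.Icc K L, (C * A * r ^ k) := Finset.sum_le_sum hterm
    _ ≤ C * A * (r ^ K / (1 - r)) := hsum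
    _ = C * A / (1 - r) * r ^ K := by ring
    _ ≤ C * A / (1 - r) * Real.exp (-(c₁ * Real.log (20/19)) * N) := by
        apply mul_le_mul_of_nonneg_left hgeom
        apply div_nonneg (mul_nonneg hC hA0); linarith
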